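/- If p ∈ ℝ^d has all entries positive and min_{w ∈ W_d} G(p,w) = (√3/2) · d / (d^{d/2} · d!) (i.e. p attains the supremum of min_{w ∈ W_d} G(·,w) over the positive orthant), then there exists κ > 0 such that p = κ·p*, where p*_1 = 1, p*_2 = 1/√3, and p*_j = √(2/3)/(j−1) for 3 ≤ j ≤ d. In other words, the set of maximizers is exactly the ray {κ·p* : κ > 0}. -/

import Mathlib

def wvec (d : ℕ) (j : Fin d) : Fin d → ℕ :=
  fun i => if i < j then 0 else if i = j then (j : ℕ) + 1 else (i : ℕ)

noncomputable def G (d : ℕ) (p : Fin d → ℝ) (w : Fin d → ℕ) : ℝ :=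
  (∏ i, p i) / (Real.sqrt (∑ i, ((w i : ℝ)) ^ 2 * p i ^ 2)) ^ d

noncomputable def minG (d : ℕ) (p : Fin d → ℝ) : ℝ :=
  ⨅ j : Fin d, G d p (wvec d j)

noncomputable def D (d : ℕ) (j : Fin d) (p : Fin d → ℝ) : ℝ :=
  Real.sqrt (∑ i, ((wvec d j i : ℝ)) ^ 2 * p i ^ 2)

/-- `p*`: `p*_1 = 1`, `p*_2 = 1/√3`, `p*_j = √(2/3)/(j−1)` for `3 ≤ j ≤ d`
(0-based: index `i` has 1-based position `i+1`, so the denominator `j−1` is `i`). -/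
noncomputable def pstar (d : ℕ) : Fin d → ℝ :=
  fun i => if (i : ℕ) = 0 then 1 else if (i : ℕ) = 1 then 1 / Real.sqrt 3
    else Real.sqrt (2 / 3) / ((i : ℕ) : ℝ)
lemma amgm_le {d : ℕ} (hd : 0 < d) (a : Fin d → ℝ) (hpos : ∀ i, 0 < a i) :
    ∑ i, Real.log (a i) ≤ d * Real.log ((∑ i, a i) / d) := by
  have hdR : (0:ℝ) < d := by exact_mod_cast hd
  have h := strictConcaveOn_log_Ioi.concaveOn.le_map_sum
    (t := Finset.univ) (w := fun _ : Fin d => (d:ℝ)⁻¹) (p := a)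
    (fun i _ => by positivity) (by simp [Finset.card_univ]; field_simp)
    (fun i _ => Set.mem_Ioi.2 (hpos i))
  simp only [smul_eq_mul, ← Finset.mul_sum] at h
  have h2 : (d:ℝ)⁻¹ * ∑ i, Real.log (a i) ≤ Real.log ((∑ i, a i)/d) := by
    simpa [div_eq_inv_mul] using h
  calc ∑ i, Real.log (a i) = d * ((d:ℝ)⁻¹ * ∑ i, Real.log (a i)) := by field_simp
    _ ≤ d * Real.log ((∑ i, a i)/d) := mul_le_mul_of_nonneg_left h2 hdR.le

lemma amgm {d : ℕ} (hd : 0 < d) (a : Fin d → ℝ) (hpos : ∀ i, 0 < a i) :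
    ∏ i, a i ≤ ((∑ i, a i) / d) ^ d ∧
      (∏ i, a i = ((∑ i, a i) / d) ^ d → ∀ i j, a i = a j) := by
  have hdR : (0:ℝ) < d := by exact_mod_cast hd
  have hm : 0 < (∑ i, a i) / d := by
    apply div_pos _ hdR
    exact Finset.sum_pos (fun i _ => hpos i)
      (Finset.univ_nonempty_iff.2 (Fin.pos_iff_nonempty.1 hd))
  have hprod : ∏ i, a i = Real.exp (∑ i, Real.log (a i)) := by
    rw [Real.exp_sum]
    exact Finset.prod_congr rfl (fun i _ => (Real.exp_log (hpos i)).symm)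
  have hpow : ((∑ i, a i) / d) ^ d = Real.exp (d * Real.log ((∑ i, a i) / d)) := by
    rw [Real.exp_nat_mul, Real.exp_log hm]
  constructor
  · rw [hprod, hpow]
    exact Real.exp_le_exp.2 (amgm_le hd a hpos)
  · intro heq i j
    have hlog : ∑ i, Real.log (a i) = d * Real.log ((∑ i, a i) / d) := by
      rw [hprod, hpow] at heq
      exact Real.exp_eq_exp.1 heq
    have key := strictConcaveOn_log_Ioi.eq_of_map_sum_eq
      (t := Finset.univ) (w := fun _ : Fin d => (d:ℝ)⁻¹) (p := a)
      (fun i _ => by positivity) (by simp [Finset.card_univ]; field_simp)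
      (fun i _ => Set.mem_Ioi.2 (hpos i)) ?_ (Finset.mem_univ i) (Finset.mem_univ j)
    · exact key
    · simp only [smul_eq_mul, ← Finset.mul_sum]
      rw [hlog, show ((d:ℝ))⁻¹ * ∑ i, a i = (∑ i, a i) / d by ring]
      rw [show (d:ℝ)⁻¹ * ((d:ℝ) * Real.log ((∑ i, a i) / d)) = Real.log ((∑ i, a i)/d) by
        field_simp]

/-- scalar weights -/
noncomputable def cfun : ℕ → ℝ := fun n => if n = 0 then 2/3 else if n = 1 then 2 else (n:ℝ)^2

noncomputable def qfun : ℕ → ℝ := fun n => if n = 0 then 1 else if n = 1 then 1 / Real.sqrt 3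
    else Real.sqrt (2 / 3) / (n : ℝ)

lemma pstar_eq_qfun (d : ℕ) (i : Fin d) : pstar d i = qfun i.val := rfl

lemma cfun_pos (n : ℕ) : 0 < cfun n := by
  unfold cfun
  split_ifs with h1 h2
  · norm_num
  · norm_num
  · have : 2 ≤ n := by omega
    positivity

lemma qfun_eq_sqrt (n : ℕ) : qfun n = Real.sqrt (2/3 / cfun n) := by
  unfold qfun cfun
  split_ifs with h1 h2
  · norm_num
  · rw [show (2:ℝ)/3/2 = 1/3 by norm_num, show (1:ℝ)/3 = 3⁻¹ by norm_num,
      Real.sqrt_inv, one_div]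
  · rw [Real.sqrt_div (by norm_num : (0:ℝ) ≤ 2/3), Real.sqrt_sq (by positivity)]

lemma qfun_pos (n : ℕ) : 0 < qfun n := by
  rw [qfun_eq_sqrt]
  exact Real.sqrt_pos.2 (div_pos (by norm_num) (cfun_pos n))

lemma qfun_sq (n : ℕ) : qfun n ^ 2 = 2/3 / cfun n := by
  rw [qfun_eq_sqrt, Real.sq_sqrt (div_nonneg (by norm_num) (cfun_pos n).le)]

lemma prod_cfun : ∀ d, 2 ≤ d → ∏ i : Fin d, cfun i.val = 4/3 * ((d-1).factorial : ℝ)^2 := by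
  intro d hd
  induction d, hd using Nat.le_induction with
  | base =>
    rw [Fin.prod_univ_two]
    norm_num [cfun]
  | succ n hn ih =>
    rw [Fin.prod_univ_castSucc]
    simp only [Fin.coe_castSucc, Fin.val_last]
    rw [ih]
    have h2 : cfun n = (n:ℝ)^2 := by
      unfold cfun
      rw [if_neg (by omega), if_neg (by omega)]
    rw [h2, Nat.add_sub_cancel]
    have h3 : (n.factorial : ℝ) = n * (n-1).factorial := by
      rw_mod_cast [Nat.mul_factorial_pred (by omega)]
    rw [h3]
    ring

lemma sqrt23_pos : (0:ℝ) < Real.sqrt (2/3) := Real.sqrt_pos.2 (by norm_num)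

lemma prod_qfun : ∀ d, 2 ≤ d →
    ∏ i : Fin d, qfun i.val
      = Real.sqrt 3 * (Real.sqrt (2/3))^d / (2 * ((d-1).factorial : ℝ)) := by
  intro d hd
  induction d, hd using Nat.le_induction with
  | base =>
    rw [Fin.prod_univ_two, Real.sq_sqrt (show (0:ℝ) ≤ 2/3 by norm_num)]
    have e0 : qfun ((0 : Fin 2) : ℕ) = 1 := rfl
    have e1 : qfun ((1 : Fin 2) : ℕ) = 1 / Real.sqrt 3 := rfl
    rw [e0, e1]
    have h3 : Real.sqrt 3 * Real.sqrt 3 = 3 := Real.mul_self_sqrt (by norm_num)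
    have h3' : Real.sqrt 3 ≠ 0 := by positivity
    rw [show ((2:ℕ)-1).factorial = 1 from rfl]
    push_cast
    field_simp; ring
    nlinarith [h3]
  | succ n hn ih =>
    rw [Fin.prod_univ_castSucc]
    simp only [Fin.coe_castSucc, Fin.val_last]
    rw [ih]
    have h2 : qfun n = Real.sqrt (2/3) / n := by
      unfold qfun
      rw [if_neg (by omega), if_neg (by omega)]
    rw [h2, Nat.add_sub_cancel]
    have h3 : (n.factorial : ℝ) = n * (n-1).factorial := by
      rw_mod_cast [Nat.mul_factorial_pred (by omega)]
    rw [h3, pow_succ]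
    have hn0 : (n:ℝ) ≠ 0 := by positivity
    have hf : ((n-1).factorial : ℝ) ≠ 0 := by positivity
    field_simp

lemma sum_tail (f : ℕ → ℝ) (hf : ∀ n, 2 ≤ n → f n = 2/3) :
    ∀ d, 2 ≤ d → ∑ i : Fin d, f i.val = f 0 + f 1 + ((d:ℝ) - 2) * (2/3) := by
  intro d hd
  induction d, hd using Nat.le_induction with
  | base => rw [Fin.sum_univ_two]; norm_num
  | succ n hn ih =>
    rw [Fin.sum_univ_castSucc]
    simp only [Fin.coe_castSucc, Fin.val_last]
    rw [ih, hf n hn]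
    push_cast
    ring

lemma wvec_val (d : ℕ) (j i : Fin d) :
    ((wvec d j i : ℕ) : ℝ)
      = if i.val < j.val then 0 else if i.val = j.val then (j.val:ℝ)+1 else (i.val:ℝ) := by
  unfold wvec
  simp only [Fin.lt_def, Fin.ext_iff]
  split_ifs <;> push_cast <;> ring

lemma wvec_val0 (d : ℕ) (j i : Fin d) (hj : j.val = 0) :
    ((wvec d j i : ℕ) : ℝ) = if i.val = 0 then 1 else (i.val:ℝ) := by
  rw [wvec_val, hj]
  split_ifs <;> first | omega | norm_num | rfl

lemma wvec_val1 (d : ℕ) (j i : Fin d) (hj : j.val = 1) :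
    ((wvec d j i : ℕ) : ℝ)
      = if i.val = 0 then 0 else if i.val = 1 then 2 else (i.val:ℝ) := by
  rw [wvec_val, hj]
  split_ifs <;> first | omega | norm_num | rfl

lemma D_sq (d : ℕ) (j : Fin d) (p : Fin d → ℝ) :
    (D d j p)^2 = ∑ i, ((wvec d j i : ℕ) : ℝ)^2 * p i^2 := by
  unfold D
  rw [Real.sq_sqrt]
  exact Finset.sum_nonneg fun i _ => mul_nonneg (sq_nonneg _) (sq_nonneg _)

lemma D_nonneg (d : ℕ) (j : Fin d) (p : Fin d → ℝ) : 0 ≤ D d j p := Real.sqrt_nonneg _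

lemma D_pos (d : ℕ) (j : Fin d) (p : Fin d → ℝ) (hp : ∀ i, 0 < p i) : 0 < D d j p := by
  unfold D
  apply Real.sqrt_pos.2
  apply Finset.sum_pos' (fun i _ => mul_nonneg (sq_nonneg _) (sq_nonneg _))
  refine ⟨j, Finset.mem_univ j, ?_⟩
  have hw : ((wvec d j j : ℕ) : ℝ) = (j.val:ℝ)+1 := by
    rw [wvec_val]; simp
  rw [hw]
  have := hp j
  positivity

lemma G_eq (d : ℕ) (p : Fin d → ℝ) (j : Fin d) :
    G d p (wvec d j) = (∏ i, p i) / (D d j p)^d := rfl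

lemma qfun_sq0 : qfun 0 ^2 = 1 := by norm_num [qfun]

lemma qfun_sq1 : qfun 1 ^2 = 1/3 := by
  have : qfun 1 = 1 / Real.sqrt 3 := rfl
  rw [this, div_pow, one_pow, Real.sq_sqrt (by norm_num : (0:ℝ) ≤ 3)]

lemma qfun_sq_tail (n : ℕ) (hn : 2 ≤ n) : qfun n ^2 = 2/3/(n:ℝ)^2 := by
  rw [qfun_sq]
  unfold cfun
  rw [if_neg (by omega), if_neg (by omega)]

lemma sum0 (d : ℕ) (hd : 2 ≤ d) (j : Fin d) (hj : j.val = 0) :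
    ∑ i, ((wvec d j i : ℕ) : ℝ)^2 * qfun i.val^2 = 2*d/3 := by
  have hpt : ∀ i : Fin d, ((wvec d j i : ℕ) : ℝ)^2 * qfun i.val^2
      = (fun (n : ℕ) => (if n = 0 then (1:ℝ) else (n:ℝ))^2 * qfun n ^2) i.val := by
    intro i; rw [wvec_val0 d j i hj]
  rw [Finset.sum_congr rfl (fun i _ => hpt i)]
  have htail : ∀ n, 2 ≤ n → (fun (n : ℕ) => (if n = 0 then (1:ℝ) else (n:ℝ))^2 * qfun n ^2) n = 2/3 := by
    intro n hn
    simp only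
    rw [if_neg (by omega), qfun_sq_tail n hn]
    have : (n:ℝ) ≠ 0 := by positivity
    field_simp
  rw [sum_tail _ htail d hd]
  simp only [if_pos rfl, if_neg (by omega : ¬ (1:ℕ) = 0)]
  rw [qfun_sq0, qfun_sq1]
  push_cast
  ring

lemma sum1 (d : ℕ) (hd : 2 ≤ d) (j : Fin d) (hj : j.val = 1) :
    ∑ i, ((wvec d j i : ℕ) : ℝ)^2 * qfun i.val^2 = 2*d/3 := by
  have hpt : ∀ i : Fin d, ((wvec d j i : ℕ) : ℝ)^2 * qfun i.val^2
      = (fun (n : ℕ) => (if n = 0 then (0:ℝ) else if n = 1 then 2 else (n:ℝ))^2 * qfun n ^2) i.val := by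
    intro i; rw [wvec_val1 d j i hj]
  rw [Finset.sum_congr rfl (fun i _ => hpt i)]
  have htail : ∀ n, 2 ≤ n → (fun (n : ℕ) => (if n = 0 then (0:ℝ) else if n = 1 then 2 else (n:ℝ))^2 * qfun n ^2) n = 2/3 := by
    intro n hn
    simp only
    rw [if_neg (by omega), if_neg (by omega), qfun_sq_tail n hn]
    have : (n:ℝ) ≠ 0 := by positivity
    field_simp
  rw [sum_tail _ htail d hd]
  simp only [if_pos rfl, if_neg (by omega : ¬ (1:ℕ) = 0), if_pos rfl]
  rw [qfun_sq0, qfun_sq1]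
  push_cast
  ring

lemma sumj (d : ℕ) (hd : 2 ≤ d) (j : Fin d) (hj : 2 ≤ j.val) :
    ∑ i, ((wvec d j i : ℕ) : ℝ)^2 * qfun i.val^2 ≤ 2*d/3 := by
  have h0d : 0 < d := by omega
  set i0 : Fin d := ⟨0, h0d⟩ with hi0
  set F : Fin d → ℝ :=
    fun i => (if i.val = 0 then (1:ℝ) else (i.val:ℝ))^2 * qfun i.val^2
      - ((wvec d j i : ℕ) : ℝ)^2 * qfun i.val^2 with hF
  have hne : i0 ≠ j := by
    intro h
    have h' : i0.val = j.val := congrArg Fin.val h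
    have h0 : i0.val = 0 := rfl
    omega
  have hsub : ({i0, j} : Finset (Fin d)) ⊆ Finset.univ := Finset.subset_univ _
  have hnonneg : ∀ i ∈ Finset.univ, i ∉ ({i0, j} : Finset (Fin d)) → 0 ≤ F i := by
    intro i _ hi
    simp only [Finset.mem_insert, Finset.mem_singleton] at hi
    push_neg at hi
    obtain ⟨hi0', hij⟩ := hi
    have hival : i.val ≠ 0 := by
      intro h; exact hi0' (Fin.ext h)
    have hijval : i.val ≠ j.val := fun h => hij (Fin.ext h)
    rw [hF]
    simp only
    rw [if_neg hival, wvec_val]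
    rcases lt_or_gt_of_ne hijval with h | h
    · rw [if_pos h]
      have : (0:ℝ)^2 * qfun i.val^2 = 0 := by ring
      rw [this, sub_zero]
      positivity
    · rw [if_neg (by omega), if_neg (by omega)]
      simp
  have hpair : F i0 + F j ≥ 0 := by
    have hFi0 : F i0 = 1 := by
      have hlt : i0.val < j.val := lt_of_lt_of_le (by norm_num) hj
      have hw : ((wvec d j i0 : ℕ) : ℝ) = 0 := by
        rw [wvec_val, if_pos hlt]
      rw [hF]
      show (if (0:ℕ) = 0 then (1:ℝ) else ((0:ℕ):ℝ))^2 * qfun 0^2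
          - ((wvec d j i0 : ℕ):ℝ)^2 * qfun 0^2 = 1
      rw [if_pos rfl, hw, qfun_sq0]
      ring
    have hFj : F j = (2/3) * ((j.val:ℝ)^2 - ((j.val:ℝ)+1)^2)/(j.val:ℝ)^2 := by
      rw [hF]
      simp only
      rw [if_neg (by omega), wvec_val]
      rw [if_neg (by omega), if_pos rfl, qfun_sq_tail _ hj]
      have : (j.val:ℝ) ≠ 0 := by positivity
      field_simp
    rw [hFi0, hFj]
    have hjR : (2:ℝ) ≤ (j.val:ℝ) := by exact_mod_cast hj
    have hj0 : (0:ℝ) < (j.val:ℝ)^2 := by positivity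
    rw [ge_iff_le, ← sub_nonneg]
    have : 1 + 2/3 * ((j.val:ℝ)^2 - ((j.val:ℝ)+1)^2)/(j.val:ℝ)^2 - 0
        = (3*(j.val:ℝ)^2 - 2*(2*(j.val:ℝ)+1))/(3*(j.val:ℝ)^2) := by
      field_simp
      ring
    rw [sub_zero] at this ⊢
    rw [this]
    apply div_nonneg _ (by positivity)
    nlinarith
  have hsumF : 0 ≤ ∑ i, F i := by
    calc (0:ℝ) ≤ F i0 + F j := hpair
    _ = ∑ i ∈ ({i0, j} : Finset (Fin d)), F i := (Finset.sum_pair hne).symm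
    _ ≤ ∑ i, F i := Finset.sum_le_sum_of_subset_of_nonneg hsub hnonneg
  have hexp : ∑ i, F i = 2*d/3 - ∑ i, ((wvec d j i : ℕ) : ℝ)^2 * qfun i.val^2 := by
    rw [hF, Finset.sum_sub_distrib]
    congr 1
    have hpt : ∀ i : Fin d, (if i.val = 0 then (1:ℝ) else (i.val:ℝ))^2 * qfun i.val^2
        = ((wvec d i0 i : ℕ) : ℝ)^2 * qfun i.val^2 := by
      intro i; rw [wvec_val0 d i0 i rfl]
    rw [Finset.sum_congr rfl (fun i _ => hpt i), sum0 d hd i0 rfl]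
  linarith [hexp ▸ hsumF]

lemma pstar_pos (d : ℕ) (i : Fin d) : 0 < pstar d i := qfun_pos i.val

lemma minG_pstar (d : ℕ) (hd : 2 ≤ d) :
    minG d (pstar d) = Real.sqrt 3 / 2 * d / (Real.sqrt d ^ d * d.factorial) := by
  have h0d : 0 < d := by omega
  set i0 : Fin d := ⟨0, h0d⟩ with hi0def
  have hi0v : i0.val = 0 := rfl
  have hppos : ∀ i, 0 < pstar d i := pstar_pos d
  have hP : ∏ i, pstar d i
      = Real.sqrt 3 * (Real.sqrt (2/3))^d / (2*((d-1).factorial:ℝ)) := by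
    rw [Finset.prod_congr rfl (fun i _ => pstar_eq_qfun d i)]
    exact prod_qfun d hd
  have hsum_eq : ∀ j : Fin d, ∑ i, ((wvec d j i : ℕ):ℝ)^2 * (pstar d i)^2
      = ∑ i, ((wvec d j i:ℕ):ℝ)^2 * qfun i.val^2 :=
    fun j => Finset.sum_congr rfl (fun i _ => by rw [pstar_eq_qfun])
  have hD0 : D d i0 (pstar d) = Real.sqrt (2*d/3) := by
    unfold D; rw [hsum_eq, sum0 d hd i0 hi0v]
  have hDle : ∀ j, D d j (pstar d) ≤ D d i0 (pstar d) := by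
    intro j
    rw [hD0]
    unfold D; rw [hsum_eq]
    apply Real.sqrt_le_sqrt
    rcases Nat.lt_or_ge j.val 2 with h | h
    · rcases Nat.lt_or_ge j.val 1 with h' | h'
      · rw [sum0 d hd j (by omega)]
      · rw [sum1 d hd j (by omega)]
    · exact sumj d hd j h
  have hDpos : ∀ j, 0 < D d j (pstar d) := fun j => D_pos _ _ _ hppos
  have hPpos : 0 < ∏ i, pstar d i := Finset.prod_pos (fun i _ => hppos i)
  have hGle : ∀ j, G d (pstar d) (wvec d i0) ≤ G d (pstar d) (wvec d j) := by
    intro j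
    rw [G_eq, G_eq]
    apply div_le_div_of_nonneg_left hPpos.le (pow_pos (hDpos j) d)
    exact pow_le_pow_left₀ (D_nonneg _ _ _) (hDle j) d
  have : Nonempty (Fin d) := ⟨i0⟩
  have hmin : minG d (pstar d) = G d (pstar d) (wvec d i0) :=
    le_antisymm (ciInf_le (Set.Finite.bddBelow (Set.finite_range _)) i0) (le_ciInf hGle)
  rw [hmin, G_eq, hD0, hP]
  have hsplit : Real.sqrt (2*(d:ℝ)/3) = Real.sqrt (2/3) * Real.sqrt d := by
    rw [show 2*(d:ℝ)/3 = 2/3*(d:ℝ) by ring, Real.sqrt_mul (by norm_num)]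
  rw [hsplit, mul_pow]
  have hA : (Real.sqrt (2/3):ℝ)^d ≠ 0 := by positivity
  have hsd : (0:ℝ) < Real.sqrt d := Real.sqrt_pos.2 (by exact_mod_cast h0d)
  have hs : (Real.sqrt (d:ℝ))^d ≠ 0 := by positivity
  have hf : ((d-1).factorial:ℝ) ≠ 0 := by positivity
  have hdf : (d.factorial : ℝ) = d * ((d-1).factorial:ℝ) := by
    rw_mod_cast [Nat.mul_factorial_pred h0d.ne']
  have hdR : ((d:ℝ)) ≠ 0 := by exact_mod_cast h0d.ne'
  rw [hdf]
  field_simp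

lemma G_smul (d : ℕ) (p : Fin d → ℝ) (w : Fin d → ℕ) (κ : ℝ) (hκ : 0 < κ) :
    G d (fun i => κ * p i) w = G d p w := by
  unfold G
  have h1 : ∏ i, (κ * p i) = κ^d * ∏ i, p i := by
    rw [Finset.prod_mul_distrib, Finset.prod_const, Finset.card_univ, Fintype.card_fin]
  have h2 : ∑ i, ((w i:ℕ):ℝ)^2 * (κ * p i)^2 = κ^2 * ∑ i, ((w i:ℕ):ℝ)^2 * p i^2 := by
    rw [Finset.mul_sum]
    exact Finset.sum_congr rfl (fun i _ => by ring)
  rw [h1, h2, Real.sqrt_mul (sq_nonneg κ), Real.sqrt_sq hκ.le, mul_pow]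
  rw [mul_div_mul_left _ _ (by positivity : κ^d ≠ 0)]

lemma minG_smul (d : ℕ) (p : Fin d → ℝ) (κ : ℝ) (hκ : 0 < κ) :
    minG d (fun i => κ * p i) = minG d p := by
  unfold minG
  exact iInf_congr (fun j => G_smul d p (wvec d j) κ hκ)

noncomputable def Eval (d : ℕ) : ℝ :=
  Real.sqrt 3 / 2 * d / (Real.sqrt d ^ d * Nat.factorial d)

lemma Eval_pos (d : ℕ) (hd : 0 < d) : 0 < Eval d := by
  have hdR : (0:ℝ) < d := by exact_mod_cast hd
  have hsd : (0:ℝ) < Real.sqrt d := Real.sqrt_pos.2 hdR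
  have h3 : (0:ℝ) < Real.sqrt 3 := Real.sqrt_pos.2 (by norm_num)
  have hfa : (0:ℝ) < (d.factorial : ℝ) := by exact_mod_cast d.factorial_pos
  exact div_pos (mul_pos (by positivity) hdR) (mul_pos (pow_pos hsd d) hfa)

lemma Eval_sq (d : ℕ) (hd : 2 ≤ d) :
    (Eval d)^2 * (d:ℝ)^d * (4/3*(((d-1).factorial:ℝ))^2) = 1 := by
  have h0d : 0 < d := by omega
  have hdR : (0:ℝ) < d := by exact_mod_cast h0d
  have h3 : (Real.sqrt 3)^2 = 3 := Real.sq_sqrt (by norm_num)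
  have hdd : ((Real.sqrt d)^d)^2 = (d:ℝ)^d := by
    rw [← pow_mul, mul_comm d 2, pow_mul, Real.sq_sqrt hdR.le]
  have hdf : (d.factorial : ℝ) = d * ((d-1).factorial:ℝ) := by
    rw_mod_cast [Nat.mul_factorial_pred h0d.ne']
  have hE2 : (Eval d)^2 = 3*(d:ℝ)^2/(4*((d:ℝ)^d * ((d.factorial:ℝ))^2)) := by
    unfold Eval
    rw [div_pow, mul_pow, mul_pow, div_pow, h3, hdd]
    ring
  rw [hE2, hdf]
  have hf : ((d-1).factorial:ℝ) ≠ 0 := by positivity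
  have hdd0 : ((d:ℝ))^d ≠ 0 := by positivity
  field_simp

/-- The set of positive `p` attaining the supremum value `(√3/2)·d/(d^{d/2}·d!)`
of `min_{w ∈ W_d} G(·,w)` is exactly the ray `{κ·p* : κ > 0}`. -/
theorem stmt2 (d : ℕ) (hd : 2 ≤ d) :
    {p : Fin d → ℝ | (∀ i, 0 < p i) ∧
        minG d p = Real.sqrt 3 / 2 * d / (Real.sqrt d ^ d * Nat.factorial d)} =
      {p : Fin d → ℝ | ∃ κ : ℝ, 0 < κ ∧ p = fun i => κ * pstar d i} := by
  have h0d : 0 < d := by omega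
  ext p
  simp only [Set.mem_setOf_eq]
  constructor
  · rintro ⟨hp, hmin0⟩
    have hmin : minG d p = Eval d := hmin0
    set i0 : Fin d := ⟨0, h0d⟩ with hi0def
    set i1 : Fin d := ⟨1, by omega⟩ with hi1def
    have hne : Nonempty (Fin d) := ⟨i0⟩
    have hEpos : 0 < Eval d := Eval_pos d h0d
    have hP : 0 < ∏ i, p i := Finset.prod_pos fun i _ => hp i
    have hle : ∀ j, Eval d ≤ G d p (wvec d j) := by
      intro j
      rw [← hmin]
      exact ciInf_le (Set.Finite.bddBelow (Set.finite_range _)) j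
    have hDpos : ∀ j, 0 < D d j p := fun j => D_pos d j p hp
    have hDd : ∀ j : Fin d, (D d j p)^d ≤ (∏ i, p i)/(Eval d) := by
      intro j
      have h := hle j
      rw [G_eq] at h
      rw [le_div_iff₀ hEpos]
      have h2 := (le_div_iff₀ (pow_pos (hDpos j) d)).1 h
      linarith
    set s := max (D d i0 p) (D d i1 p) with hs
    have hspos : 0 < s := lt_max_of_lt_left (hDpos i0)
    have hsd' : s^d ≤ (∏ i, p i)/(Eval d) := by
      rcases max_choice (D d i0 p) (D d i1 p) with h | h <;> rw [hs, h]
      exacts [hDd i0, hDd i1]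
    set a : Fin d → ℝ := fun i => cfun i.val * p i^2 with ha
    have hapos : ∀ i, 0 < a i := fun i => mul_pos (cfun_pos _) (pow_pos (hp i) 2)
    have hptw : ∀ i : Fin d, a i
        = 2/3*(((wvec d i0 i:ℕ):ℝ)^2*p i^2) + 1/3*(((wvec d i1 i:ℕ):ℝ)^2*p i^2) := by
      intro i
      rw [ha]; simp only
      rw [wvec_val0 d i0 i rfl, wvec_val1 d i1 i rfl]
      unfold cfun
      by_cases h0 : i.val = 0
      · rw [if_pos h0, if_pos h0, if_pos h0]; ring
      · by_cases h1 : i.val = 1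
        · rw [if_neg h0, if_pos h1, if_neg h0, if_neg h0, if_pos h1, h1]; norm_num; ring
        · rw [if_neg h0, if_neg h1, if_neg h0, if_neg h0, if_neg h1]; ring
    have hsuma : ∑ i, a i = 2/3*(D d i0 p)^2 + 1/3*(D d i1 p)^2 := by
      rw [D_sq, D_sq, Finset.mul_sum, Finset.mul_sum, ← Finset.sum_add_distrib]
      exact Finset.sum_congr rfl fun i _ => hptw i
    have hsums : ∑ i, a i ≤ s^2 := by
      have h0 : (D d i0 p)^2 ≤ s^2 := pow_le_pow_left₀ (D_nonneg _ _ _) (le_max_left _ _) 2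
      have h1 : (D d i1 p)^2 ≤ s^2 := pow_le_pow_left₀ (D_nonneg _ _ _) (le_max_right _ _) 2
      rw [hsuma]; linarith
    have hproda : ∏ i, a i = 4/3*(((d-1).factorial:ℝ))^2 * (∏ i, p i)^2 := by
      rw [ha]; simp only
      rw [Finset.prod_mul_distrib, prod_cfun d hd, ← Finset.prod_pow]
    have hsumnn : 0 ≤ ∑ i, a i := Finset.sum_nonneg fun i _ => (hapos i).le
    have hdR : (0:ℝ) < d := by exact_mod_cast h0d
    have hinv : ((Eval d)^2*(d:ℝ)^d)⁻¹ = 4/3*(((d-1).factorial:ℝ))^2 := by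
      have h := Eval_sq d hd
      have h1 : (Eval d)^2*(d:ℝ)^d ≠ 0 := by positivity
      field_simp at h ⊢
      linarith
    have hup : ((∑ i, a i)/d)^d ≤ ∏ i, a i := by
      calc ((∑ i, a i)/d)^d ≤ (s^2/d)^d := by
            apply pow_le_pow_left₀ (by positivity)
            gcongr
        _ = (s^d)^2/(d:ℝ)^d := by
            rw [div_pow, ← pow_mul, mul_comm 2 d, pow_mul]
        _ ≤ ((∏ i, p i)/(Eval d))^2/(d:ℝ)^d := by
            gcongr
        _ = (∏ i, p i)^2 * ((Eval d)^2*(d:ℝ)^d)⁻¹ := by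
            rw [div_pow]; ring
        _ = ∏ i, a i := by rw [hinv, hproda]; ring
    have hkey : ∏ i, a i = ((∑ i, a i)/d)^d := le_antisymm ((amgm h0d a hapos).1) hup
    have haeq := (amgm h0d a hapos).2 hkey
    refine ⟨p i0, hp i0, funext fun i => ?_⟩
    have h := haeq i i0
    rw [ha] at h; simp only at h
    have hc0 : cfun (i0.val) = 2/3 := rfl
    rw [hc0] at h
    have hcp := cfun_pos i.val
    have hsq : p i ^2 = (qfun i.val * p i0)^2 := by
      rw [mul_pow, qfun_sq, div_mul_eq_mul_div, eq_div_iff hcp.ne']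
      linarith [h]
    have hval : p i = qfun i.val * p i0 := by
      have hpos2 : 0 ≤ qfun i.val * p i0 := by
        have := qfun_pos i.val
        have := hp i0
        positivity
      calc p i = Real.sqrt (p i^2) := (Real.sqrt_sq (hp i).le).symm
        _ = Real.sqrt ((qfun i.val*p i0)^2) := by rw [hsq]
        _ = qfun i.val * p i0 := Real.sqrt_sq hpos2
    rw [hval, pstar_eq_qfun]; ring
  · rintro ⟨κ, hκ, rfl⟩
    refine ⟨fun i => mul_pos hκ (pstar_pos d i), ?_⟩
    rw [minG_smul d (pstar d) κ hκ]
    exact minG_pstar d hd
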